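/- Let C₀ ⊆ C₁, C₂ ⊆ C be full subcategories with C₀ = C₁ ∩ C₂ such that every object of C lies in C₁ or in C₂, and let φ : C → X be a functor to a category X. Then φ is a (pointwise) right Kan extension of its restriction φ|_{C₀} along the inclusion C₀ ↪ C if and only if φ|_{C₁} is a right Kan extension of φ|_{C₀} along C₀ ↪ C₁ and φ|_{C₂} is a right Kan extension of φ|_{C₀} along C₀ ↪ C₂. -/

import Mathlib

open CategoryTheory

/-- `φ : C ⥤ X` is a pointwise right Kan extension of its restriction to the
full subcategory of objects satisfying `Q`, along the inclusion: for every
`c : C`, the object `φ(c)` with the canonical cone is a limit of the diagram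
`(c ↓ Q) → X`. (Expressed via the universal property of the limit.) -/
def IsPtwiseRKE {C X : Type*} [Category C] [Category X] (Q : C → Prop)
    (φ : C ⥤ X) : Prop :=
  ∀ (c : C) (x : X)
    (legs : ∀ d : StructuredArrow c (ObjectProperty.ι Q),
      x ⟶ φ.obj ((ObjectProperty.ι Q).obj d.right)),
    (∀ (d d' : StructuredArrow c (ObjectProperty.ι Q)) (g : d ⟶ d'),
      legs d ≫ φ.map ((ObjectProperty.ι Q).map g.right) = legs d') →
    ∃! u : x ⟶ φ.obj c, ∀ d, u ≫ φ.map d.hom = legs d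


def RKEat {C X : Type*} [Category C] [Category X] (Q : C → Prop)
    (φ : C ⥤ X) (c : C) : Prop :=
  ∀ (x : X)
    (legs : ∀ d : StructuredArrow c (ObjectProperty.ι Q),
      x ⟶ φ.obj ((ObjectProperty.ι Q).obj d.right)),
    (∀ (d d' : StructuredArrow c (ObjectProperty.ι Q)) (g : d ⟶ d'),
      legs d ≫ φ.map ((ObjectProperty.ι Q).map g.right) = legs d') →
    ∃! u : x ⟶ φ.obj c, ∀ d, u ≫ φ.map d.hom = legs d

section
variable (P Q : C → Prop) [Category C]
variable {C : Type*}

abbrev Arr {C : Type*} [Category C] (P Q : C → Prop) (c : C) :=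
  StructuredArrow c (ObjectProperty.ι (fun c => P c ∧ Q c))
abbrev Arr' {C : Type*} [Category C] (P Q : C → Prop) (c : ObjectProperty.FullSubcategory P) :=
  StructuredArrow c (ObjectProperty.ι (fun d : ObjectProperty.FullSubcategory P => Q d.obj))

def toB {C : Type*} [Category C] (P Q : C → Prop) {c : C} (hc : P c) (d : Arr P Q c) :
    Arr' P Q ⟨c, hc⟩ :=
  ⟨⟨⟨⟩⟩, ⟨⟨d.right.obj, d.right.property.1⟩, d.right.property.2⟩, ObjectProperty.homMk d.hom⟩

def toA {C : Type*} [Category C] (P Q : C → Prop) {c : C} (hc : P c) (d : Arr' P Q ⟨c, hc⟩) :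
    Arr P Q c :=
  ⟨⟨⟨⟩⟩, ⟨d.right.obj.obj, d.right.obj.property, d.right.property⟩, d.hom.hom⟩

end

lemma key {C X : Type*} [Category C] [Category X] (P Q : C → Prop)
    {φ : C ⥤ X} {c : C} (hc : P c) :
    RKEat (fun c => P c ∧ Q c) φ c ↔
      RKEat (fun d : ObjectProperty.FullSubcategory P => Q d.obj) (ObjectProperty.ι P ⋙ φ) ⟨c, hc⟩ := by
  constructor
  · intro H x legs hlegs
    obtain ⟨u, hu, huniq⟩ := H x (fun d => legs (toB P Q hc d)) (by
      intro d d' g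
      exact hlegs (toB P Q hc d) (toB P Q hc d')
        (StructuredArrow.homMk (ObjectProperty.homMk (ObjectProperty.homMk g.right.hom)) (ObjectProperty.hom_ext _ (StructuredArrow.w g))))
    refine ⟨u, fun d => by exact hu (toA P Q hc d), fun u' hu' => huniq u' (fun d => by exact hu' (toB P Q hc d))⟩
  · intro H x legs hlegs
    obtain ⟨u, hu, huniq⟩ := H x (fun d => legs (toA P Q hc d)) (by
      intro d d' g
      exact hlegs (toA P Q hc d) (toA P Q hc d')
        (StructuredArrow.homMk (ObjectProperty.homMk g.right.hom.hom) (by have := congrArg (fun f => f.hom) (StructuredArrow.w g); exact this)))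
    refine ⟨u, fun d => by exact hu (toB P Q hc d), fun u' hu' => huniq u' (fun d => by exact hu' (toA P Q hc d))⟩

/-- Let `C₀ = C₁ ∩ C₂` be full subcategories of `C` such that every object of
`C` lies in `C₁` or `C₂`.  A functor `φ : C ⥤ X` is a pointwise right Kan
extension of `φ|_{C₀}` along `C₀ ↪ C` if and only if `φ|_{C₁}` is a pointwise
right Kan extension of `φ|_{C₀}` along `C₀ ↪ C₁` and `φ|_{C₂}` is a pointwise
right Kan extension of `φ|_{C₀}` along `C₀ ↪ C₂`. -/
theorem stmt13 {C X : Type*} [Category C] [Category X] (P₁ P₂ : C → Prop)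
    (φ : C ⥤ X) (hcover : ∀ c, P₁ c ∨ P₂ c) :
    IsPtwiseRKE (fun c => P₁ c ∧ P₂ c) φ ↔
      (IsPtwiseRKE (fun d : ObjectProperty.FullSubcategory P₁ => P₂ d.obj)
          (ObjectProperty.ι P₁ ⋙ φ) ∧
        IsPtwiseRKE (fun d : ObjectProperty.FullSubcategory P₂ => P₁ d.obj)
          (ObjectProperty.ι P₂ ⋙ φ)) := by
  have hswap : (fun c => P₁ c ∧ P₂ c) = (fun c => P₂ c ∧ P₁ c) := by
    funext c; exact propext and_comm
  have hiff : IsPtwiseRKE (fun c => P₁ c ∧ P₂ c) φ ↔ IsPtwiseRKE (fun c => P₂ c ∧ P₁ c) φ := by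
    rw [hswap]
  constructor
  · intro H
    refine ⟨fun c₁ => (key P₁ P₂ c₁.property).mp (H c₁.obj), ?_⟩
    exact fun c₂ => (key P₂ P₁ c₂.property).mp (hiff.mp H c₂.obj)
  · rintro ⟨H₁, H₂⟩ c
    rcases hcover c with hc | hc
    · exact (key P₁ P₂ hc).mpr (H₁ ⟨c, hc⟩)
    · show RKEat (fun c => P₁ c ∧ P₂ c) φ c
      rw [hswap]
      exact (key P₂ P₁ hc).mpr (H₂ ⟨c, hc⟩)
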